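/- If S : Π → ℝ is a function on finite probability distributions satisfying (i) continuity of p ↦ S(p, 1−p) on [0,1], (ii) normalization S(1/2,1/2) = log 2, (iii) symmetry under permutations of arguments, and (iv) the recursion S(p₁,…,p_{n−1}, η·pₙ, (1−η)·pₙ) = S(p₁,…,pₙ) + pₙ·S(η, 1−η) for all 0 ≤ η ≤ 1, then S(p₁,…,pₙ) = −∑ᵢ pᵢ log pᵢ (Khinchin–Faddeev characterization of Shannon entropy). -/

import Mathlib

open scoped BigOperators ComplexOrder
open Matrix

noncomputable section

/-- Finite-dimensional complex Hilbert space of dimension `m`. -/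
abbrev H (m : ℕ) := EuclideanSpace ℂ (Fin m)

/-- The tensor product `H m ⊗ H n`, realized as `EuclideanSpace ℂ (Fin m × Fin n)`. -/
abbrev HT (m n : ℕ) := EuclideanSpace ℂ (Fin m × Fin n)

/-- Elementary tensor `a ⊗ b`. -/
def tensorVec {m n : ℕ} (a : H m) (b : H n) : HT m n :=
  WithLp.toLp 2 fun (p : Fin m × Fin n) => a p.1 * b p.2

/-- The projection `|ψ⟩⟨ψ|` as a matrix. -/
def proj {m n : ℕ} (ψ : HT m n) : Matrix (Fin m × Fin n) (Fin m × Fin n) ℂ :=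
  Matrix.of fun x y => ψ x * (starRingEnd ℂ) (ψ y)

/-- The projection `|a⟩⟨a|` on a single factor. -/
def proj1 {m : ℕ} (a : H m) : Matrix (Fin m) (Fin m) ℂ :=
  Matrix.of fun i j => a i * (starRingEnd ℂ) (a j)

/-- Partial trace over the second factor. -/
def ptrace2 {m n : ℕ} (M : Matrix (Fin m × Fin n) (Fin m × Fin n) ℂ) :
    Matrix (Fin m) (Fin m) ℂ :=
  Matrix.of fun i j => ∑ k : Fin n, M (i, k) (j, k)

/-- Partial trace over the first factor. -/
def ptrace1 {m n : ℕ} (M : Matrix (Fin m × Fin n) (Fin m × Fin n) ℂ) :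
    Matrix (Fin n) (Fin n) ℂ :=
  Matrix.of fun i j => ∑ k : Fin m, M (k, i) (k, j)

/-- Von Neumann entropy `-Tr(ρ ln ρ)` of a Hermitian matrix, via its eigenvalues. -/
def vnEnt {k : ℕ} {M : Matrix (Fin k) (Fin k) ℂ} (h : M.IsHermitian) : ℝ :=
  ∑ i, Real.negMulLog (h.eigenvalues i)

/-- Kronecker product of square matrices. -/
def kron {m n : ℕ} (A : Matrix (Fin m) (Fin m) ℂ) (B : Matrix (Fin n) (Fin n) ℂ) :
    Matrix (Fin m × Fin n) (Fin m × Fin n) ℂ :=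
  Matrix.of fun p q => A p.1 q.1 * B p.2 q.2

/-- Action of a matrix on a vector. -/
def matVec {m n : ℕ} (M : Matrix (Fin m × Fin n) (Fin m × Fin n) ℂ) (ψ : HT m n) :
    HT m n := WithLp.toLp 2 fun (p : Fin m × Fin n) => ∑ q, M p q * ψ q

/-- The canonical pure state with Schmidt coefficients `μ`. -/
def stdVec {k : ℕ} (μ : Fin k → ℝ) : HT k k :=
  WithLp.toLp 2 fun (p : Fin k × Fin k) => if p.1 = p.2 then (Real.sqrt (μ p.1) : ℂ) else 0

/-- Strong Schmidt orthogonality: the supports of both reduced density matrices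
are orthogonal. -/
def SchmidtOrthogonal {m n : ℕ} (ψ φ : HT m n) : Prop :=
  ptrace2 (proj ψ) * ptrace2 (proj φ) = 0 ∧ ptrace1 (proj ψ) * ptrace1 (proj φ) = 0

/-- Image of `ψ` under the tensor product of two isometric embeddings. -/
def tensorMap {m n m' n' : ℕ} (f : H m →ₗᵢ[ℂ] H m') (g : H n →ₗᵢ[ℂ] H n')
    (ψ : HT m n) : HT m' n' :=
  WithLp.toLp 2 fun (p : Fin m' × Fin n') => ∑ q : Fin m × Fin n,
    ψ q * f (EuclideanSpace.single q.1 1) p.1 * g (EuclideanSpace.single q.2 1) p.2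

/-- Finite probability distribution. -/
def IsProbDist {k : ℕ} (p : Fin k → ℝ) : Prop := (∀ i, 0 ≤ p i) ∧ ∑ i, p i = 1

/-- Multiset of nonzero Schmidt coefficients of `ψ` (eigenvalues of the reduced
density matrix). -/
def schmidtMultiset {m n : ℕ} (ψ : HT m n) (h : (ptrace2 (proj ψ)).IsHermitian) :
    Multiset ℝ :=
  (Finset.univ.val.map h.eigenvalues).filter (· ≠ 0)

/-- Trace norm of a matrix. -/
def trNorm {a b : ℕ} (A : Matrix (Fin a) (Fin b) ℂ) : ℝ :=
  ∑ i, Real.sqrt ((Matrix.posSemidef_conjTranspose_mul_self A).1.eigenvalues i)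

/-- The greatest cross norm. -/
def gcn {m n : ℕ} (M : Matrix (Fin m × Fin n) (Fin m × Fin n) ℂ) : ℝ :=
  sInf { t : ℝ | ∃ (k : ℕ) (x : Fin k → Matrix (Fin m) (Fin m) ℂ)
    (y : Fin k → Matrix (Fin n) (Fin n) ℂ),
    M = ∑ i, kron (x i) (y i) ∧ t = ∑ i, trNorm (x i) * trNorm (y i) }

/-- Density operator. -/
def IsDensity {d : Type*} [Fintype d] [DecidableEq d] (M : Matrix d d ℂ) : Prop :=
  M.PosSemidef ∧ M.trace = 1

set_option maxHeartbeats 1000000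

section KFAux
open Real Finset

noncomputable def unifFun (n : ℕ) : Fin n → ℝ := fun _ => 1/(n:ℝ)

lemma sum_fin_ite (N t : ℕ) (ht : t ≤ N) (x y : ℝ) :
    ∑ i : Fin N, (if (i : ℕ) < t then x else y) = t * x + (N - t : ℕ) * y := by
  rw [Fin.sum_univ_eq_sum_range (fun i => if i < t then x else y) N]
  rw [Finset.range_eq_Ico, ← Finset.sum_Ico_consecutive _ (Nat.zero_le t) ht]
  have e1 : ∑ i ∈ Finset.Ico 0 t, (if i < t then x else y) = ∑ _i ∈ Finset.Ico 0 t, x :=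
    Finset.sum_congr rfl (fun i hi => by simp only [Finset.mem_Ico] at hi; simp [hi.2])
  have e2 : ∑ i ∈ Finset.Ico t N, (if i < t then x else y) = ∑ _i ∈ Finset.Ico t N, y :=
    Finset.sum_congr rfl (fun i hi => by simp only [Finset.mem_Ico] at hi; simp [Nat.not_lt.2 hi.1])
  rw [e1, e2]
  simp [mul_comm]

noncomputable def cseq (S : ∀ n : ℕ, (Fin n → ℝ) → ℝ) : ℕ → ℝ
  | 0 => 0
  | k+1 => S 2 ![1/((k:ℝ)+2), 1 - 1/((k:ℝ)+2)] + (((k:ℝ)+1)/((k:ℝ)+2)) * cseq S k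

lemma S_one (S : ∀ n : ℕ, (Fin n → ℝ) → ℝ)
    (hnorm : S 2 ![1/2, 1/2] = Real.log 2)
    (hrec : ∀ (n : ℕ) (p : Fin (n + 1) → ℝ), IsProbDist p → ∀ η : ℝ, 0 ≤ η → η ≤ 1 →
      S (n + 2) (Fin.snoc (Function.update p (Fin.last n) (η * p (Fin.last n)))
          ((1 - η) * p (Fin.last n)))
        = S (n + 1) p + p (Fin.last n) * S 2 ![η, 1 - η]) :
    ∀ p : Fin 1 → ℝ, IsProbDist p → S 1 p = 0 := by
  intro p hp
  have hp0 : p (Fin.last 0) = 1 := by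
    have := hp.2
    simpa [Fin.sum_univ_one] using this
  have h := hrec 0 p hp (1/2) (by norm_num) (by norm_num)
  rw [hp0] at h
  have e1 : Fin.snoc (Function.update p (Fin.last 0) ((1:ℝ)/2 * 1)) ((1 - 1/2) * 1)
      = ![(1:ℝ)/2, 1/2] := by
    funext i
    refine Fin.lastCases ?_ ?_ i
    · rw [Fin.snoc_last, show (Fin.last 1) = (1 : Fin 2) from rfl]
      norm_num
    · intro j
      rw [Fin.snoc_castSucc, Subsingleton.elim j (Fin.last 0), Function.update_self,
        show (Fin.castSucc (Fin.last 0)) = (0 : Fin 2) from rfl]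
      norm_num
  have e2 : (![(1:ℝ)/2, 1 - 1/2]) = ![(1:ℝ)/2, 1/2] := by norm_num
  rw [e1, e2, hnorm] at h
  linarith

lemma EXP (S : ∀ n : ℕ, (Fin n → ℝ) → ℝ)
    (hrec : ∀ (n : ℕ) (p : Fin (n + 1) → ℝ), IsProbDist p → ∀ η : ℝ, 0 ≤ η → η ≤ 1 →
      S (n + 2) (Fin.snoc (Function.update p (Fin.last n) (η * p (Fin.last n)))
          ((1 - η) * p (Fin.last n)))
        = S (n + 1) p + p (Fin.last n) * S 2 ![η, 1 - η]) :
    ∀ (k m N : ℕ), N = m + 1 + k → ∀ (q : Fin N → ℝ) (r : Fin (m+1) → ℝ),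
      IsProbDist r →
      (∀ i : Fin N, q i = if h : (i : ℕ) < m then r ⟨i, h.trans (Nat.lt_succ_self m)⟩
        else r (Fin.last m) / ((k:ℝ)+1)) →
      S N q = S (m+1) r + r (Fin.last m) * cseq S k := by
  intro k
  induction k with
  | zero =>
    intro m N hN q r hr hq
    subst hN
    have hqr : q = r := by
      funext i
      rw [hq i]
      by_cases h : (i:ℕ) < m
      · rw [dif_pos h]
      · rw [dif_neg h]
        have hi : i = Fin.last m := Fin.ext (by simp [Fin.val_last]; omega)
        rw [hi]
        norm_num
    rw [hqr]
    simp [cseq]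
  | succ k ih =>
    intro m N hN q r hr hq
    have ha0 : 0 ≤ r (Fin.last m) := hr.1 _
    set a := r (Fin.last m) with ha
    set η : ℝ := 1/((k:ℝ)+2) with hη
    have hk2 : (0:ℝ) < (k:ℝ)+2 := by positivity
    have hη0 : 0 ≤ η := by positivity
    have hη1 : η ≤ 1 := by
      rw [hη, div_le_one hk2]
      have : (0:ℝ) ≤ (k:ℝ) := Nat.cast_nonneg k
      linarith
    have hrecinst := hrec m r hr η hη0 hη1
    set r₂ : Fin (m+2) → ℝ :=
      Fin.snoc (Function.update r (Fin.last m) (η * a)) ((1-η) * a) with hr₂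
    have hr₂cs : ∀ j : Fin (m+1), r₂ j.castSucc = Function.update r (Fin.last m) (η*a) j :=
      fun j => Fin.snoc_castSucc _ _ j
    have hr₂l : r₂ (Fin.last (m+1)) = (1-η) * a := Fin.snoc_last _ _
    have hr₂p : IsProbDist r₂ := by
      constructor
      · intro i
        refine Fin.lastCases ?_ ?_ i
        · rw [hr₂l]
          exact mul_nonneg (by linarith) ha0
        · intro j
          rw [hr₂cs j]
          by_cases hj : j = Fin.last m
          · rw [hj, Function.update_self]
            exact mul_nonneg hη0 ha0
          · rw [Function.update_of_ne hj]
            exact hr.1 j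
      · rw [Fin.sum_univ_castSucc]
        have e : ∑ j : Fin (m+1), r₂ j.castSucc
            = ∑ j : Fin (m+1), Function.update r (Fin.last m) (η*a) j :=
          Finset.sum_congr rfl (fun j _ => hr₂cs j)
        rw [e, hr₂l, Finset.sum_update_of_mem (Finset.mem_univ _)]
        rw [show (Finset.univ \ {Fin.last m}) = Finset.univ.erase (Fin.last m) by
          rw [Finset.sdiff_singleton_eq_erase]]
        rw [Finset.sum_erase_eq_sub (Finset.mem_univ _)]
        rw [hr.2]
        ring
    have hq2 : ∀ i : Fin N, q i = if h : (i : ℕ) < m + 1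
        then r₂ ⟨i, h.trans (Nat.lt_succ_self (m+1))⟩
        else r₂ (Fin.last (m+1)) / ((k:ℝ)+1) := by
      intro i
      rw [hq i]
      rcases lt_trichotomy ((i:ℕ)) m with h | h | h
      · rw [dif_pos h, dif_pos (by omega)]
        have e : (⟨(i:ℕ), (by omega)⟩ : Fin (m+2))
            = Fin.castSucc ⟨(i:ℕ), (by omega : (i:ℕ) < m+1)⟩ := rfl
        rw [e, hr₂cs, Function.update_of_ne (by simp [Fin.ext_iff, Fin.val_last]; omega)]
      · rw [dif_neg (by omega), dif_pos (by omega)]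
        have e : (⟨(i:ℕ), (by omega)⟩ : Fin (m+2))
            = Fin.castSucc (Fin.last m) := by
          simp [Fin.ext_iff]; omega
        rw [e, hr₂cs, Function.update_self, hη]
        push_cast
        ring
      · rw [dif_neg (by omega), dif_neg (by omega), hr₂l, hη]
        have h1 : ((k:ℝ)+1) ≠ 0 := by positivity
        have h2 : ((k:ℝ)+2) ≠ 0 := by positivity
        push_cast
        field_simp
        ring
    have ihinst := ih (m+1) N (by omega) q r₂ hr₂p hq2
    rw [ihinst, hr₂l, hrecinst]
    have hc : cseq S (k+1) = S 2 ![η, 1-η] + (((k:ℝ)+1)/((k:ℝ)+2)) * cseq S k := by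
      rw [hη]; simp [cseq]
    rw [hc, hη]
    field_simp
    ring

lemma UNIF (S : ∀ n : ℕ, (Fin n → ℝ) → ℝ)
    (hnorm : S 2 ![1/2, 1/2] = Real.log 2)
    (hrec : ∀ (n : ℕ) (p : Fin (n + 1) → ℝ), IsProbDist p → ∀ η : ℝ, 0 ≤ η → η ≤ 1 →
      S (n + 2) (Fin.snoc (Function.update p (Fin.last n) (η * p (Fin.last n)))
          ((1 - η) * p (Fin.last n)))
        = S (n + 1) p + p (Fin.last n) * S 2 ![η, 1 - η]) :
    ∀ k : ℕ, S (k+1) (unifFun (k+1)) = cseq S k := by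
  intro k
  have hr : IsProbDist (fun _ : Fin 1 => (1:ℝ)) := ⟨fun _ => zero_le_one, by simp⟩
  have h := EXP S hrec k 0 (k+1) (by omega) (unifFun (k+1)) (fun _ => 1) hr (by
    intro i
    rw [dif_neg (by omega)]
    simp only [unifFun]
    push_cast
    ring)
  rw [h, S_one S hnorm hrec _ hr]
  ring
lemma BETA (S : ∀ n : ℕ, (Fin n → ℝ) → ℝ)
    (hnorm : S 2 ![1/2, 1/2] = Real.log 2)
    (hsymm : ∀ (n : ℕ) (p : Fin n → ℝ), IsProbDist p → ∀ σ : Equiv.Perm (Fin n),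
      S n (p ∘ σ) = S n p)
    (hrec : ∀ (n : ℕ) (p : Fin (n + 1) → ℝ), IsProbDist p → ∀ η : ℝ, 0 ≤ η → η ≤ 1 →
      S (n + 2) (Fin.snoc (Function.update p (Fin.last n) (η * p (Fin.last n)))
          ((1 - η) * p (Fin.last n)))
        = S (n + 1) p + p (Fin.last n) * S 2 ![η, 1 - η]) :
    ∀ j l : ℕ,
      cseq S (j+l+1) = S 2 ![((j:ℝ)+1)/((j:ℝ)+(l:ℝ)+2), 1 - ((j:ℝ)+1)/((j:ℝ)+(l:ℝ)+2)]
        + (((j:ℝ)+1)/((j:ℝ)+(l:ℝ)+2)) * cseq S j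
        + (1 - ((j:ℝ)+1)/((j:ℝ)+(l:ℝ)+2)) * cseq S l := by
  intro j l
  set x : ℝ := ((j:ℝ)+1)/((j:ℝ)+(l:ℝ)+2) with hx
  have hd : (0:ℝ) < (j:ℝ)+(l:ℝ)+2 := by positivity
  have hx0 : 0 ≤ x := by positivity
  have hx1 : x ≤ 1 := by
    rw [hx, div_le_one hd]
    have : (0:ℝ) ≤ (l:ℝ) := Nat.cast_nonneg l
    linarith
  have hl1 : ((l:ℝ)+1) ≠ 0 := by positivity
  have hj1 : ((j:ℝ)+1) ≠ 0 := by positivity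
  have hrp : IsProbDist (![x, 1-x]) := by
    constructor
    · intro i
      fin_cases i
      · simpa using hx0
      · simpa using by linarith
    · rw [Fin.sum_univ_two]
      simp
  -- step 1
  set q₁ : Fin (l+2) → ℝ := fun i => if (i:ℕ) < 1 then x else (1-x)/((l:ℝ)+1) with hq₁
  have h1 := EXP S hrec l 1 (l+2) (by omega) q₁ ![x, 1-x] hrp (by
    intro i
    by_cases h : (i:ℕ) < 1
    · rw [hq₁, dif_pos h]
      simp only
      rw [if_pos h]
      have e : (⟨(i:ℕ), h.trans (Nat.lt_succ_self 1)⟩ : Fin 2) = 0 := by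
        exact Fin.ext (by show (i:ℕ) = 0; omega)
      rw [e]
      simp
    · rw [hq₁, dif_neg h]
      simp only
      rw [if_neg h, show Fin.last 1 = (1 : Fin 2) from rfl]
      simp)
  have hlast : (![x, 1-x]) (Fin.last 1) = 1 - x := by
    rw [show Fin.last 1 = (1 : Fin 2) from rfl]; simp
  rw [hlast] at h1
  -- q₁ is a prob dist
  have hq₁p : IsProbDist q₁ := by
    constructor
    · intro i
      rw [hq₁]
      simp only
      split
      · exact hx0
      · have h1x : (0:ℝ) ≤ 1-x := by linarith
        positivity
    · rw [hq₁]
      rw [sum_fin_ite (l+2) 1 (by omega) x ((1-x)/((l:ℝ)+1))]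
      have : ((l+2-1 : ℕ) : ℝ) = (l:ℝ)+1 := by push_cast [Nat.cast_sub]; ring
      rw [this]
      field_simp
      push_cast; ring
  -- step 2 : rotate
  set q₂ : Fin (l+2) → ℝ := fun i => if (i:ℕ) < l+1 then (1-x)/((l:ℝ)+1) else x with hq₂
  have hq₂eq : q₂ = q₁ ∘ (finRotate (l+2)) := by
    funext i
    simp only [Function.comp_apply, finRotate_succ_apply, hq₁, hq₂]
    rw [Fin.val_add_one]
    by_cases h : i = Fin.last (l+1)
    · rw [if_pos h, if_neg (by simp [h, Fin.val_last]), if_pos (by omega)]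
    · rw [if_neg h]
      have hv : (i:ℕ) < l+1 := by
        have := i.isLt
        have : (i:ℕ) ≠ l+1 := fun hc => h (Fin.ext (by simp [Fin.val_last, hc]))
        omega
      rw [if_pos hv, if_neg (by omega)]
  have hS12 : S (l+2) q₂ = S (l+2) q₁ := by
    rw [hq₂eq]
    exact hsymm (l+2) q₁ hq₁p (finRotate (l+2))
  -- q₂ prob dist
  have hq₂p : IsProbDist q₂ := by
    constructor
    · intro i
      rw [hq₂]
      simp only
      split
      · have h1x : (0:ℝ) ≤ 1-x := by linarith
        positivity
      · exact hx0
    · rw [hq₂]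
      rw [sum_fin_ite (l+2) (l+1) (by omega) ((1-x)/((l:ℝ)+1)) x]
      have : ((l+2-(l+1) : ℕ) : ℝ) = 1 := by
        rw [show l+2-(l+1) = 1 by omega]; norm_num
      rw [this]
      field_simp
      push_cast; ring
  -- step 3
  have hq₂last : q₂ (Fin.last (l+1)) = x := by
    rw [hq₂]; simp only; rw [if_neg (by simp [Fin.val_last])]
  have h3 := EXP S hrec j (l+1) (j+l+2) (by omega) (unifFun (j+l+2)) q₂ hq₂p (by
    intro i
    have hn : ((j+l+2 : ℕ) : ℝ) = (j:ℝ)+(l:ℝ)+2 := by push_cast; ring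
    by_cases h : (i:ℕ) < l+1
    · rw [dif_pos h]
      rw [hq₂]
      simp only
      rw [if_pos h, unifFun, hn, hx]
      field_simp
      ring
    · rw [dif_neg h, hq₂last, unifFun, hn, hx]
      field_simp)
  rw [hq₂last] at h3
  have hu : S (j+l+2) (unifFun (j+l+2)) = cseq S (j+l+1) :=
    UNIF S hnorm hrec (j+l+1)
  rw [hu, hS12, h1] at h3
  rw [h3]
  ring
lemma sum_fin_ite2 (N t₁ t₂ : ℕ) (h1 : t₁ ≤ t₂) (h2 : t₂ ≤ N) (x y z : ℝ) :
    ∑ i : Fin N, (if (i : ℕ) < t₁ then x else if (i : ℕ) < t₂ then y else z)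
      = t₁ * x + (t₂ - t₁ : ℕ) * y + (N - t₂ : ℕ) * z := by
  rw [Fin.sum_univ_eq_sum_range (fun i => if i < t₁ then x else if i < t₂ then y else z) N]
  rw [Finset.range_eq_Ico, ← Finset.sum_Ico_consecutive _ (Nat.zero_le t₂) h2,
    ← Finset.sum_Ico_consecutive _ (Nat.zero_le t₁) h1]
  have e1 : ∑ i ∈ Finset.Ico 0 t₁, (if i < t₁ then x else if i < t₂ then y else z)
      = ∑ _i ∈ Finset.Ico 0 t₁, x :=
    Finset.sum_congr rfl (fun i hi => by simp only [Finset.mem_Ico] at hi; simp [hi.2])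
  have e2 : ∑ i ∈ Finset.Ico t₁ t₂, (if i < t₁ then x else if i < t₂ then y else z)
      = ∑ _i ∈ Finset.Ico t₁ t₂, y :=
    Finset.sum_congr rfl (fun i hi => by
      simp only [Finset.mem_Ico] at hi; simp [Nat.not_lt.2 hi.1, hi.2])
  have e3 : ∑ i ∈ Finset.Ico t₂ N, (if i < t₁ then x else if i < t₂ then y else z)
      = ∑ _i ∈ Finset.Ico t₂ N, z :=
    Finset.sum_congr rfl (fun i hi => by
      simp only [Finset.mem_Ico] at hi
      simp [Nat.not_lt.2 hi.1, Nat.not_lt.2 (h1.trans hi.1)])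
  rw [e1, e2, e3]
  simp [mul_comm, add_assoc]

lemma MULT (S : ∀ n : ℕ, (Fin n → ℝ) → ℝ)
    (hnorm : S 2 ![1/2, 1/2] = Real.log 2)
    (hsymm : ∀ (n : ℕ) (p : Fin n → ℝ), IsProbDist p → ∀ σ : Equiv.Perm (Fin n),
      S n (p ∘ σ) = S n p)
    (hrec : ∀ (n : ℕ) (p : Fin (n + 1) → ℝ), IsProbDist p → ∀ η : ℝ, 0 ≤ η → η ≤ 1 →
      S (n + 2) (Fin.snoc (Function.update p (Fin.last n) (η * p (Fin.last n)))
          ((1 - η) * p (Fin.last n)))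
        = S (n + 1) p + p (Fin.last n) * S 2 ![η, 1 - η]) :
    ∀ m n : ℕ, S ((m+1)*(n+1)) (unifFun ((m+1)*(n+1)))
      = S (m+1) (unifFun (m+1)) + S (n+1) (unifFun (n+1)) := by
  intro m n
  set sm : ℝ := 1/(((m:ℝ)+1)*((n:ℝ)+1)) with hsm
  set big : ℝ := 1/((m:ℝ)+1) with hbig
  have hm1 : ((m:ℝ)+1) ≠ 0 := by positivity
  have hn1 : ((n:ℝ)+1) ≠ 0 := by positivity
  have hsm0 : 0 ≤ sm := by positivity
  have hbig0 : 0 ≤ big := by positivity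
  have hbigsm : big / ((n:ℝ)+1) = sm := by rw [hbig, hsm]; field_simp
  -- the invariant
  have INV : ∀ j : ℕ, j ≤ m → ∀ N : ℕ, N = j*(n+1) + (m - j) + 1 →
      ∀ q : Fin N → ℝ, (∀ i : Fin N, q i = if (i:ℕ) < j*(n+1) then sm else big) →
      S N q = S (m+1) (unifFun (m+1)) + (j:ℝ)/((m:ℝ)+1) * cseq S n := by
    intro j
    induction j with
    | zero =>
      intro _ N hN q hq
      have hNm : N = m + 1 := by omega
      subst hNm
      have : q = unifFun (m+1) := by
        funext i
        rw [hq i, if_neg (by omega), unifFun, hbig]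
        push_cast
        ring
      rw [this]
      simp
    | succ j ih =>
      intro hj1 N hN q hq
      have hjm : j ≤ m := by omega
      have hexp : (j+1)*(n+1) = j*(n+1)+(n+1) := by ring
      rw [hexp] at hN
      simp only [hexp] at hq
      haveI : NeZero N := ⟨by omega⟩
      set M : ℕ := j*(n+1) + (m - j) with hM
      -- the j-pattern distribution
      set q₀ : Fin (M+1) → ℝ := fun i => if (i:ℕ) < j*(n+1) then sm else big with hq₀
      have hq₀p : IsProbDist q₀ := by
        constructor
        · intro i; rw [hq₀]; simp only; split
          · exact hsm0
          · exact hbig0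
        · rw [hq₀]
          rw [sum_fin_ite (M+1) (j*(n+1)) (by omega) sm big]
          rw [show M+1 - j*(n+1) = m - j + 1 by omega]
          rw [hsm, hbig]
          push_cast [Nat.cast_sub hjm]
          field_simp
          ring
      have hq₀ih := ih hjm (M+1) (by omega) q₀ (fun i => rfl)
      have hq₀last : q₀ (Fin.last M) = big := by
        rw [hq₀]; simp only
        rw [if_neg (by simp [Fin.val_last]; omega)]
      -- expanded 3-block pattern
      set q₃ : Fin N → ℝ :=
        fun i => if (i:ℕ) < j*(n+1) then sm else if (i:ℕ) < M then big else sm with hq₃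
      have h3 := EXP S hrec n M N (by omega) q₃ q₀ hq₀p (by
        intro i
        rw [hq₃]
        simp only
        by_cases h : (i:ℕ) < M
        · rw [dif_pos h]
          rw [hq₀]
          simp only
          by_cases h2 : (i:ℕ) < j*(n+1)
          · rw [if_pos h2, if_pos h2]
          · rw [if_neg h2, if_pos h, if_neg h2]
        · rw [dif_neg h, hq₀last, hbigsm, if_neg (by omega), if_neg (by omega)])
      rw [hq₀last, hq₀ih] at h3
      -- q₃ is a prob dist
      have hq₃p : IsProbDist q₃ := by
        constructor
        · intro i; rw [hq₃]; simp only; split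
          · exact hsm0
          · split
            · exact hbig0
            · exact hsm0
        · rw [hq₃]
          rw [sum_fin_ite2 N (j*(n+1)) M (by omega) (by omega) sm big sm]
          rw [show M - j*(n+1) = m - j by omega, show N - M = n + 1 by omega]
          rw [hsm, hbig]
          push_cast [Nat.cast_sub hjm]
          field_simp
          ring
      -- rotation
      set c : Fin N := ⟨M, by omega⟩ with hc
      have hcv : (c : ℕ) = M := by
        rw [hc]
      have hrot : q = q₃ ∘ (Equiv.addRight c) := by
        funext i
        simp only [Function.comp_apply, Equiv.coe_addRight]
        rw [hq i, hq₃]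
        simp only
        have hval : ((i + c : Fin N) : ℕ) = ((i:ℕ) + M) % N := by
          rw [Fin.val_add, hcv]
        by_cases h1 : (i:ℕ) < n+1
        · have hmod : ((i:ℕ) + M) % N = (i:ℕ) + M := Nat.mod_eq_of_lt (by omega)
          rw [if_pos (by omega : (i:ℕ) < j*(n+1)+(n+1)), hval, hmod,
            if_neg (by omega), if_neg (by omega)]
        · have hge : N ≤ (i:ℕ) + M := by omega
          have hmod : ((i:ℕ) + M) % N = (i:ℕ) + M - N := by
            rw [Nat.mod_eq_sub_mod hge]
            exact Nat.mod_eq_of_lt (by omega)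
          by_cases h2 : (i:ℕ) < j*(n+1)+(n+1)
          · rw [if_pos h2, hval, hmod, if_pos (by omega)]
          · rw [if_neg h2, hval, hmod, if_neg (by omega), if_pos (by omega)]
      have hSrot : S N q = S N q₃ := by
        rw [hrot]
        exact hsymm N q₃ hq₃p (Equiv.addRight c)
      rw [hSrot, h3]
      push_cast
      rw [hbig]
      field_simp
      ring
  -- final step: expand the last big entry of the j = m pattern
  set Mf : ℕ := m*(n+1) + (m - m) with hMf
  set qf : Fin (Mf+1) → ℝ := fun i => if (i:ℕ) < m*(n+1) then sm else big with hqf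
  have hqfp : IsProbDist qf := by
    constructor
    · intro i; rw [hqf]; simp only; split
      · exact hsm0
      · exact hbig0
    · rw [hqf]
      rw [sum_fin_ite (Mf+1) (m*(n+1)) (by omega) sm big]
      rw [show Mf+1 - m*(n+1) = 1 by omega]
      rw [hsm, hbig]
      push_cast
      field_simp
  have hqfih := INV m le_rfl (Mf+1) (by omega) qf (fun i => rfl)
  have hqflast : qf (Fin.last Mf) = big := by
    rw [hqf]; simp only
    rw [if_neg (by simp [Fin.val_last]; omega)]
  have hfin := EXP S hrec n Mf ((m+1)*(n+1)) (by
    have : (m+1)*(n+1) = m*(n+1) + (n+1) := by ring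
    omega) (unifFun ((m+1)*(n+1))) qf hqfp (by
    intro i
    by_cases h : (i:ℕ) < Mf
    · rw [dif_pos h]
      rw [hqf]
      simp only
      rw [if_pos (by omega)]
      rw [unifFun, hsm]
      push_cast
      ring
    · rw [dif_neg h, hqflast, hbigsm, unifFun, hsm]
      push_cast
      ring)
  rw [hfin, hqflast, hqfih, UNIF S hnorm hrec n]
  rw [hbig]
  field_simp
  ring
lemma L_zero (S : ∀ n : ℕ, (Fin n → ℝ) → ℝ)
    (hnorm : S 2 ![1/2, 1/2] = Real.log 2)
    (hsymm : ∀ (n : ℕ) (p : Fin n → ℝ), IsProbDist p → ∀ σ : Equiv.Perm (Fin n),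
      S n (p ∘ σ) = S n p)
    (hrec : ∀ (n : ℕ) (p : Fin (n + 1) → ℝ), IsProbDist p → ∀ η : ℝ, 0 ≤ η → η ≤ 1 →
      S (n + 2) (Fin.snoc (Function.update p (Fin.last n) (η * p (Fin.last n)))
          ((1 - η) * p (Fin.last n)))
        = S (n + 1) p + p (Fin.last n) * S 2 ![η, 1 - η]) :
    S 2 ![(0:ℝ), 1] = 0 ∧ S 2 ![(1:ℝ), 0] = 0 := by
  have hp01 : IsProbDist (![(0:ℝ), 1]) := by
    constructor
    · intro i; fin_cases i <;> norm_num
    · rw [Fin.sum_univ_two]; norm_num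
  have hp12 : IsProbDist (![(1:ℝ)/2, 1/2]) := by
    constructor
    · intro i; fin_cases i <;> norm_num
    · rw [Fin.sum_univ_two]; norm_num
  -- L1 = L0 via swap
  have hswap : S 2 ![(1:ℝ), 0] = S 2 ![(0:ℝ), 1] := by
    have h := hsymm 2 ![(0:ℝ), 1] hp01 (Equiv.swap 0 1)
    have e : (![(0:ℝ), 1]) ∘ (Equiv.swap 0 1) = ![(1:ℝ), 0] := by
      funext i
      fin_cases i <;> simp [Equiv.swap_apply_of_ne_of_ne]
    rwa [e] at h
  -- step (i)
  have h1 := hrec 1 ![(0:ℝ), 1] hp01 (1/2) (by norm_num) (by norm_num)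
  have e1 : (![(0:ℝ), 1]) (Fin.last 1) = 1 := rfl
  rw [e1] at h1
  have v1 : Fin.snoc (Function.update (![(0:ℝ), 1]) (Fin.last 1) ((1:ℝ)/2 * 1)) ((1 - 1/2) * 1)
      = ![(0:ℝ), 1/2, 1/2] := by
    funext i
    fin_cases i <;> norm_num [Fin.snoc, Function.update, Fin.ext_iff, Fin.castPred_zero, Fin.castPred_one]
  rw [v1] at h1
  have e2 : (![(1:ℝ)/2, 1 - 1/2]) = ![(1:ℝ)/2, 1/2] := by norm_num
  rw [e2, hnorm] at h1
  -- step (ii)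
  have h2 := hrec 1 ![(1:ℝ)/2, 1/2] hp12 1 (by norm_num) (by norm_num)
  have e3 : (![(1:ℝ)/2, 1/2]) (Fin.last 1) = 1/2 := rfl
  rw [e3] at h2
  have v2 : Fin.snoc (Function.update (![(1:ℝ)/2, 1/2]) (Fin.last 1) ((1:ℝ) * (1/2))) ((1 - 1) * (1/2))
      = ![(1:ℝ)/2, 1/2, 0] := by
    funext i
    fin_cases i <;> norm_num [Fin.snoc, Function.update, Fin.ext_iff, Fin.castPred_zero, Fin.castPred_one]
  rw [v2] at h2
  have e4 : (![(1:ℝ), 1 - 1]) = ![(1:ℝ), 0] := by norm_num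
  rw [e4, hnorm] at h2
  -- step (iii): rotation
  have hp3 : IsProbDist (![(0:ℝ), 1/2, 1/2]) := by
    constructor
    · intro i; fin_cases i <;> norm_num
    · rw [Fin.sum_univ_three]; norm_num; show (1:ℝ)/2 + 1/2 = 1; norm_num
  have hrot : S 3 ![(1:ℝ)/2, 1/2, 0] = S 3 ![(0:ℝ), 1/2, 1/2] := by
    have h := hsymm 3 ![(0:ℝ), 1/2, 1/2] hp3 (finRotate 3)
    have e : (![(0:ℝ), 1/2, 1/2]) ∘ (finRotate 3) = ![(1:ℝ)/2, 1/2, 0] := by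
      funext i
      fin_cases i <;> simp [finRotate_succ_apply] <;> norm_num [Fin.ext_iff]
    rwa [e] at h
  rw [hrot, h1] at h2
  have hL0 : S 2 ![(0:ℝ), 1] = 0 := by
    rw [hswap] at h2
    linarith
  exact ⟨hL0, by rw [hswap, hL0]⟩
lemma ent2_rat (a b : ℕ) :
    negMulLog (((a:ℝ)+1)/((a:ℝ)+(b:ℝ)+2)) + negMulLog (1 - ((a:ℝ)+1)/((a:ℝ)+(b:ℝ)+2))
      = Real.log ((a:ℝ)+(b:ℝ)+2) - (((a:ℝ)+1)/((a:ℝ)+(b:ℝ)+2)) * Real.log ((a:ℝ)+1)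
        - (((b:ℝ)+1)/((a:ℝ)+(b:ℝ)+2)) * Real.log ((b:ℝ)+1) := by
  have hN : ((a:ℝ)+(b:ℝ)+2) ≠ 0 := by positivity
  have hA : ((a:ℝ)+1) ≠ 0 := by positivity
  have hB : ((b:ℝ)+1) ≠ 0 := by positivity
  have h1 : (1 - ((a:ℝ)+1)/((a:ℝ)+(b:ℝ)+2)) = ((b:ℝ)+1)/((a:ℝ)+(b:ℝ)+2) := by
    field_simp; ring
  rw [h1, negMulLog, negMulLog, Real.log_div hA hN, Real.log_div hB hN]
  field_simp
  ring

lemma additive_slow (γ : ℕ → ℝ) (h1 : γ 1 = 0) (h2 : γ 2 = 0)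
    (hmul : ∀ a b : ℕ, 1 ≤ a → 1 ≤ b → γ (a*b) = γ a + γ b)
    (hΔ : ∀ ε : ℝ, 0 < ε → ∃ T : ℕ, ∀ t : ℕ, T ≤ t → |γ (t+1) - γ t| ≤ ε) :
    ∀ m : ℕ, 1 ≤ m → γ m = 0 := by
  -- key estimate
  have key : ∀ ε : ℝ, 0 < ε → ∃ K : ℝ, 0 ≤ K ∧ ∀ n : ℕ, |γ n| ≤ K + (Nat.log 2 n) * ε := by
    intro ε hε
    obtain ⟨T₀, hT₀⟩ := hΔ ε hε
    set T := T₀ + 2 with hT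
    have step : ∀ n : ℕ, T ≤ n → |γ n - γ (n/2)| ≤ ε := by
      intro n hn
      have hq1 : 1 ≤ n / 2 := Nat.one_le_div_iff (by norm_num) |>.2 (by omega)
      have h2q : γ (2 * (n/2)) = γ (n/2) := by
        rw [hmul 2 (n/2) (by norm_num) hq1, h2]; ring
      have e3 : γ (2*(n/2)) = γ (n/2) := h2q
      rcases Nat.even_or_odd n with ⟨q, hq⟩ | ⟨q, hq⟩
      · have e1 : n / 2 = q := by omega
        have e2 : γ n = γ (2*q) := by rw [show n = 2*q by omega]
        have e4 : γ (2*q) = γ q := by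
          rw [hmul 2 q (by norm_num) (by omega), h2]; ring
        rw [e1, e2, e4]
        simp [le_of_lt hε]
      · have e1 : n / 2 = q := by omega
        have e4 : γ (2*q) = γ q := by
          rw [hmul 2 q (by norm_num) (by omega), h2]; ring
        rw [e1, show n = 2*q+1 by omega, ← e4]
        exact hT₀ (2*q) (by omega)
    refine ⟨∑ i ∈ Finset.range T, |γ i|, Finset.sum_nonneg (fun i _ => abs_nonneg _), ?_⟩
    intro n
    induction n using Nat.strong_induction_on with
    | _ n ih =>
      by_cases hn : n < T
      · have h1' : |γ n| ≤ ∑ i ∈ Finset.range T, |γ i| :=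
          Finset.single_le_sum (fun i _ => abs_nonneg (γ i)) (Finset.mem_range.2 hn)
        have : (0:ℝ) ≤ (Nat.log 2 n) * ε := by positivity
        linarith
      · push_neg at hn
        have hdiv : n / 2 < n := Nat.div_lt_self (by omega) (by norm_num)
        have ihd := ih (n/2) hdiv
        have hstep := step n hn
        have hlog : (Nat.log 2 (n/2) : ℝ) = (Nat.log 2 n : ℝ) - 1 := by
          have e1 : Nat.log 2 (n/2) = Nat.log 2 n - 1 := Nat.log_div_base 2 n
          have e2 : 1 ≤ Nat.log 2 n := Nat.log_pos (by norm_num) (by omega)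
          rw [e1, Nat.cast_sub e2, Nat.cast_one]
        have : |γ n| ≤ |γ (n/2)| + ε := by
          have := abs_sub_abs_le_abs_sub (γ n) (γ (n/2))
          linarith [abs_abs (γ n)]
        rw [hlog] at ihd
        nlinarith
  intro m hm
  rcases eq_or_lt_of_le hm with h | hm2
  · rw [← h]; exact h1
  -- m ≥ 2
  have hpow : ∀ k : ℕ, γ (m^k) = k * γ m := by
    intro k
    induction k with
    | zero => simpa using h1
    | succ k ih =>
      rw [pow_succ, hmul (m^k) m (Nat.one_le_pow _ _ (by omega)) (by omega), ih]
      push_cast; ring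
  have hlogm : (0:ℝ) < Real.log m := Real.log_pos (by exact_mod_cast hm2)
  have hlog2 : (0:ℝ) < Real.log 2 := Real.log_pos (by norm_num)
  -- main bound: ∀ ε>0, |γ m| ≤ ε * log m / log 2
  have main : ∀ ε : ℝ, 0 < ε → |γ m| ≤ ε * Real.log m / Real.log 2 := by
    intro ε hε
    obtain ⟨K, hK0, hK⟩ := key ε hε
    have bound : ∀ k : ℕ, 1 ≤ k → |γ m| ≤ K / k + ε * Real.log m / Real.log 2 := by
      intro k hk
      have hkR : (0:ℝ) < k := by exact_mod_cast hk
      have h1' := hK (m^k)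
      rw [hpow] at h1'
      have habs : |(k:ℝ) * γ m| = k * |γ m| := by
        rw [abs_mul, abs_of_nonneg (le_of_lt hkR)]
      rw [habs] at h1'
      -- Nat.log 2 (m^k) * log 2 ≤ k * log m
      have hmk : m ^ k ≠ 0 := by positivity
      have hle : (2:ℕ) ^ (Nat.log 2 (m^k)) ≤ m ^ k := Nat.pow_log_le_self 2 hmk
      have hleR : ((2:ℝ)) ^ (Nat.log 2 (m^k)) ≤ (m:ℝ) ^ k := by exact_mod_cast hle
      have hlogle : (Nat.log 2 (m^k) : ℝ) * Real.log 2 ≤ k * Real.log m := by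
        have := Real.log_le_log (by positivity) hleR
        rwa [Real.log_pow, Real.log_pow] at this
      have hlogle2 : (Nat.log 2 (m^k) : ℝ) ≤ k * Real.log m / Real.log 2 :=
        (le_div_iff₀ hlog2).2 hlogle
      have : (k:ℝ) * |γ m| ≤ K + (k * Real.log m / Real.log 2) * ε := by
        calc (k:ℝ) * |γ m| ≤ K + (Nat.log 2 (m^k)) * ε := h1'
        _ ≤ K + (k * Real.log m / Real.log 2) * ε := by nlinarith
      rw [div_add' _ _ _ (ne_of_gt hkR)]
      rw [le_div_iff₀ hkR]
      calc |γ m| * k = k * |γ m| := by ring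
      _ ≤ K + (k * Real.log m / Real.log 2) * ε := this
      _ = K + ε * Real.log m / Real.log 2 * k := by ring
    -- take k large
    by_contra hcon
    push_neg at hcon
    set δ := |γ m| - ε * Real.log m / Real.log 2 with hδ
    have hδ0 : 0 < δ := by simp [hδ]; linarith
    obtain ⟨k, hk⟩ := exists_nat_gt (K / δ + 1)
    have hk1 : 1 ≤ k := by
      by_contra h
      push_neg at h
      interval_cases k
      simp at hk
      nlinarith [div_nonneg hK0 (le_of_lt hδ0)]
    have := bound k hk1
    have hkR : (0:ℝ) < k := by exact_mod_cast hk1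
    have : K / k < δ := by
      rw [div_lt_iff₀ hkR]
      have h' : K / δ < k := by linarith
      have hlt : K < (k:ℝ) * δ := (div_lt_iff₀ hδ0).mp h'
      calc K < (k:ℝ) * δ := hlt
      _ = δ * (k:ℝ) := mul_comm _ _
    simp only [hδ] at this
    linarith [bound k hk1]
  -- conclude
  have : |γ m| ≤ 0 := by
    by_contra h
    push_neg at h
    have hεc : 0 < |γ m| * Real.log 2 / (2 * Real.log m) := by positivity
    have := main _ hεc
    rw [show |γ m| * Real.log 2 / (2 * Real.log m) * Real.log m / Real.log 2 = |γ m| / 2 by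
      field_simp] at this
    linarith
  have h0 : |γ m| = 0 := le_antisymm this (abs_nonneg _)
  exact abs_eq_zero.mp h0

lemma F_zero (S : ∀ n : ℕ, (Fin n → ℝ) → ℝ)
    (hcont : ContinuousOn (fun t : ℝ => S 2 ![t, 1 - t]) (Set.Icc 0 1))
    (hnorm : S 2 ![1/2, 1/2] = Real.log 2)
    (hsymm : ∀ (n : ℕ) (p : Fin n → ℝ), IsProbDist p → ∀ σ : Equiv.Perm (Fin n),
      S n (p ∘ σ) = S n p)
    (hrec : ∀ (n : ℕ) (p : Fin (n + 1) → ℝ), IsProbDist p → ∀ η : ℝ, 0 ≤ η → η ≤ 1 →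
      S (n + 2) (Fin.snoc (Function.update p (Fin.last n) (η * p (Fin.last n)))
          ((1 - η) * p (Fin.last n)))
        = S (n + 1) p + p (Fin.last n) * S 2 ![η, 1 - η]) :
    ∀ x ∈ Set.Icc (0:ℝ) 1, S 2 ![x, 1-x] = Real.negMulLog x + Real.negMulLog (1-x) := by
  set F : ℝ → ℝ := fun x => S 2 ![x, 1-x] - (negMulLog x + negMulLog (1-x)) with hF
  suffices hFz : ∀ x ∈ Set.Icc (0:ℝ) 1, F x = 0 by
    intro x hx
    have := hFz x hx
    rw [hF] at this
    simp only at this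
    linarith
  have hFcont : ContinuousOn F (Set.Icc 0 1) := by
    apply ContinuousOn.sub hcont
    exact (Real.continuous_negMulLog.add
      (Real.continuous_negMulLog.comp (continuous_const.sub continuous_id))).continuousOn
  obtain ⟨C, hC⟩ := isCompact_Icc.exists_bound_of_continuousOn hFcont
  have hCabs : ∀ x ∈ Set.Icc (0:ℝ) 1, |F x| ≤ C := by
    intro x hx
    have := hC x hx
    rwa [Real.norm_eq_abs] at this
  have hC0 : 0 ≤ C := le_trans (abs_nonneg _) (hCabs 0 ⟨le_refl 0, zero_le_one⟩)
  have hF0 : F 0 = 0 := by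
    rw [hF]
    simp only
    have e : (![(0:ℝ), 1-0]) = ![(0:ℝ), 1] := by norm_num
    rw [e, (L_zero S hnorm hsymm hrec).1]
    simp [Real.negMulLog_zero, Real.negMulLog_one]
  -- gamma
  set gam : ℕ → ℝ := fun t => S t (unifFun t) - Real.log t with hgam
  have hup : IsProbDist (unifFun 1) := by
    constructor
    · intro i; rw [unifFun]; norm_num
    · rw [Fin.sum_univ_one, unifFun]; norm_num
  have hg1 : gam 1 = 0 := by
    rw [hgam]
    simp only
    rw [S_one S hnorm hrec _ hup]
    simp
  have hg2 : gam 2 = 0 := by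
    have h1 := UNIF S hnorm hrec 1
    have h2 : cseq S 1 = Real.log 2 := by
      simp only [cseq]
      norm_num
      exact hnorm
    rw [hgam]
    simp only
    rw [h1, h2]
    norm_num
  have hmulg : ∀ a b : ℕ, 1 ≤ a → 1 ≤ b → gam (a*b) = gam a + gam b := by
    intro a b ha hb
    obtain ⟨m, rfl⟩ : ∃ m, a = m+1 := ⟨a-1, by omega⟩
    obtain ⟨n, rfl⟩ : ∃ n, b = n+1 := ⟨b-1, by omega⟩
    rw [hgam]
    simp only
    rw [MULT S hnorm hsymm hrec m n]
    have e : Real.log (((m+1)*(n+1) : ℕ):ℝ) = Real.log ((m+1:ℕ):ℝ) + Real.log ((n+1:ℕ):ℝ) := by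
      push_cast
      rw [← Real.log_mul (by positivity) (by positivity)]
    rw [e]
    ring
  have hrecg : ∀ s : ℕ, gam (s+2) = (((s:ℝ)+1)/((s:ℝ)+2)) * gam (s+1) + F (1/((s:ℝ)+2)) := by
    intro s
    have hu1 : S (s+2) (unifFun (s+2)) = cseq S (s+1) := UNIF S hnorm hrec (s+1)
    have hu0 : S (s+1) (unifFun (s+1)) = cseq S s := UNIF S hnorm hrec s
    have hcs : cseq S (s+1)
        = S 2 ![1/((s:ℝ)+2), 1 - 1/((s:ℝ)+2)] + (((s:ℝ)+1)/((s:ℝ)+2)) * cseq S s := by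
      simp [cseq]
    have hent := ent2_rat 0 s
    norm_num [Real.log_one] at hent
    rw [hgam]
    simp only
    rw [hu1, hu0, hcs, hF]
    simp only
    push_cast
    simp only [one_div]
    linear_combination hent
  -- F (1/(u+2)) tends to 0
  have hFsmall : ∀ ε : ℝ, 0 < ε → ∃ T : ℕ, ∀ u : ℕ, T ≤ u → |F (1/((u:ℝ)+2))| ≤ ε := by
    intro ε hε
    have h1 : Filter.Tendsto (fun u : ℕ => ((u:ℝ)+2)) Filter.atTop Filter.atTop :=
      Filter.tendsto_atTop_add_const_right Filter.atTop (2:ℝ) tendsto_natCast_atTop_atTop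
    have h2 : Filter.Tendsto (fun u : ℕ => 1/((u:ℝ)+2)) Filter.atTop (nhds 0) := by
      simp only [one_div]
      exact h1.inv_tendsto_atTop
    have hmem : ∀ u : ℕ, 1/((u:ℝ)+2) ∈ Set.Icc (0:ℝ) 1 := by
      intro u
      constructor
      · positivity
      · rw [div_le_one (by positivity)]
        have : (0:ℝ) ≤ (u:ℝ) := Nat.cast_nonneg u
        linarith
    have h3 : Filter.Tendsto (fun u : ℕ => 1/((u:ℝ)+2)) Filter.atTop
        (nhdsWithin 0 (Set.Icc 0 1)) :=
      tendsto_nhdsWithin_iff.mpr ⟨h2, Filter.Eventually.of_forall hmem⟩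
    have h4 : Filter.Tendsto (fun u : ℕ => F (1/((u:ℝ)+2))) Filter.atTop (nhds 0) := by
      have := (hFcont 0 ⟨le_refl 0, zero_le_one⟩).tendsto.comp h3
      rwa [hF0] at this
    have h5 := Metric.tendsto_atTop.mp h4 ε hε
    obtain ⟨T, hT⟩ := h5
    exact ⟨T, fun u hu => by
      have := hT u hu
      rw [Real.dist_eq, sub_zero] at this
      exact le_of_lt this⟩
  -- quadratic bound on |(s+1) * gam (s+1)|
  have hbound : ∀ ε' : ℝ, 0 < ε' → ∀ T₁ : ℕ, (∀ u, T₁ ≤ u → |F (1/((u:ℝ)+2))| ≤ ε') →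
      ∀ s : ℕ, |((s:ℝ)+1) * gam (s+1)|
        ≤ C * (((min (s+1) (T₁+1) : ℕ)):ℝ)^2 + ε' * ((s:ℝ)+1)^2 := by
    intro ε' hε' T₁ hT₁ s
    induction s with
    | zero =>
      rw [hg1]
      simp only [mul_zero, abs_zero]
      positivity
    | succ s ih =>
      have e : ((s:ℝ)+1+1) * gam (s+2)
          = ((s:ℝ)+1) * gam (s+1) + ((s:ℝ)+2) * F (1/((s:ℝ)+2)) := by
        rw [hrecg s]
        field_simp
        ring
      have habs : |((s:ℝ)+1+1) * gam (s+2)|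
          ≤ |((s:ℝ)+1) * gam (s+1)| + ((s:ℝ)+2) * |F (1/((s:ℝ)+2))| := by
        rw [e]
        have h2' : |((s:ℝ)+2) * F (1/((s:ℝ)+2))| = ((s:ℝ)+2) * |F (1/((s:ℝ)+2))| := by
          rw [abs_mul, abs_of_nonneg (by positivity : (0:ℝ) ≤ (s:ℝ)+2)]
        exact le_trans (abs_add_le _ _) (by rw [h2'])
      by_cases h : T₁ ≤ s
      · have hFb := hT₁ s h
        have hm1 : (min (s+1+1) (T₁+1) : ℕ) = T₁+1 := by omega
        have hm2 : (min (s+1) (T₁+1) : ℕ) = T₁+1 := by omega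
        rw [hm1]
        rw [hm2] at ih
        push_cast at ih habs ⊢
        nlinarith [abs_nonneg (((s:ℝ)+1) * gam (s+1)), abs_nonneg (F (1/((s:ℝ)+2))),
          (Nat.cast_nonneg s : (0:ℝ) ≤ (s:ℝ))]
      · have hFb : |F (1/((s:ℝ)+2))| ≤ C := hCabs _ (by
          constructor
          · positivity
          · rw [div_le_one (by positivity)]
            have : (0:ℝ) ≤ (s:ℝ) := Nat.cast_nonneg s
            linarith)
        have hm1 : (min (s+1+1) (T₁+1) : ℕ) = s+1+1 := by omega
        have hm2 : (min (s+1) (T₁+1) : ℕ) = s+1 := by omega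
        rw [hm1]
        rw [hm2] at ih
        push_cast at ih habs ⊢
        nlinarith [abs_nonneg (((s:ℝ)+1) * gam (s+1)), abs_nonneg (F (1/((s:ℝ)+2))),
          (Nat.cast_nonneg s : (0:ℝ) ≤ (s:ℝ))]
  -- slow variation
  have hDelta : ∀ ε : ℝ, 0 < ε → ∃ T : ℕ, ∀ t : ℕ, T ≤ t → |gam (t+1) - gam t| ≤ ε := by
    intro ε hε
    have hε3 : 0 < ε/3 := by linarith
    obtain ⟨T₁, hT₁⟩ := hFsmall (ε/3) hε3
    set D : ℝ := C * (((T₁+1 : ℕ)):ℝ)^2 with hD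
    have hD0 : 0 ≤ D := by positivity
    obtain ⟨T₂, hT₂⟩ := exists_nat_gt (D / (ε/3))
    refine ⟨T₂ + T₁ + 1, fun t ht => ?_⟩
    obtain ⟨s, rfl⟩ : ∃ s, t = s + 1 := ⟨t-1, by omega⟩
    have hsT₁ : T₁ ≤ s := by omega
    have hsT₂ : T₂ ≤ s := by omega
    have hb := hbound (ε/3) hε3 T₁ hT₁ s
    rw [show (min (s+1) (T₁+1) : ℕ) = T₁+1 by omega] at hb
    have hFb := hT₁ s hsT₁
    have hs1 : (0:ℝ) < (s:ℝ)+1 := by positivity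
    have hs2 : (0:ℝ) < (s:ℝ)+2 := by positivity
    have e : gam (s+2) - gam (s+1) = F (1/((s:ℝ)+2))
        - (((s:ℝ)+1) * gam (s+1)) / (((s:ℝ)+1) * ((s:ℝ)+2)) := by
      rw [hrecg s]
      field_simp
      ring
    rw [e]
    have h1 : |F (1/((s:ℝ)+2)) - (((s:ℝ)+1) * gam (s+1)) / (((s:ℝ)+1) * ((s:ℝ)+2))|
        ≤ |F (1/((s:ℝ)+2))| + |((s:ℝ)+1) * gam (s+1)| / (((s:ℝ)+1) * ((s:ℝ)+2)) := by
      refine le_trans (abs_sub _ _) ?_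
      rw [abs_div, abs_of_nonneg (by positivity : (0:ℝ) ≤ ((s:ℝ)+1) * ((s:ℝ)+2))]
    have h2 : |((s:ℝ)+1) * gam (s+1)| / (((s:ℝ)+1) * ((s:ℝ)+2))
        ≤ (D + (ε/3) * ((s:ℝ)+1)^2) / (((s:ℝ)+1) * ((s:ℝ)+2)) := by
      have hb' : |((s:ℝ)+1) * gam (s+1)| ≤ D + (ε/3) * ((s:ℝ)+1)^2 := by
        rw [hD]
        exact hb
      gcongr
    have key1 : D < (ε/3) * ((s:ℝ)+1) := by
      have hT₂s : (T₂:ℝ) ≤ (s:ℝ)+1 := by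
        have : (T₂:ℝ) ≤ (s:ℝ) := by exact_mod_cast hsT₂
        linarith
      have h' : D/(ε/3) < (s:ℝ)+1 := lt_of_lt_of_le hT₂ hT₂s
      calc D = (D/(ε/3)) * (ε/3) := by field_simp
      _ < ((s:ℝ)+1) * (ε/3) := by nlinarith
      _ = (ε/3) * ((s:ℝ)+1) := mul_comm _ _
    have hfrac : (D + (ε/3) * ((s:ℝ)+1)^2) / (((s:ℝ)+1) * ((s:ℝ)+2)) ≤ 2*ε/3 := by
      rw [div_le_iff₀ (by positivity)]
      have e1 : D ≤ (ε/3) * (((s:ℝ)+1)*((s:ℝ)+2)) := by nlinarith [key1, hs1, hε3]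
      have e2 : (ε/3) * ((s:ℝ)+1)^2 ≤ (ε/3) * (((s:ℝ)+1)*((s:ℝ)+2)) := by nlinarith [hs1, hε3]
      linarith
    linarith [h1, h2, hFb, hfrac]
  -- gamma vanishes
  have hgz : ∀ t : ℕ, 1 ≤ t → gam t = 0 := additive_slow gam hg1 hg2 hmulg hDelta
  -- cseq values
  have hcval : ∀ t : ℕ, cseq S t = Real.log ((t:ℝ)+1) := by
    intro t
    have h1 := UNIF S hnorm hrec t
    have h2 := hgz (t+1) (by omega)
    rw [hgam] at h2
    simp only at h2
    rw [← h1]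
    have : S (t+1) (unifFun (t+1)) = Real.log ((t+1:ℕ):ℝ) := by linarith
    rw [this]
    push_cast
    ring_nf
  -- F vanishes at rationals
  have hFrat : ∀ j l : ℕ, F (((j:ℝ)+1)/((j:ℝ)+(l:ℝ)+2)) = 0 := by
    intro j l
    have hb := BETA S hnorm hsymm hrec j l
    rw [hcval (j+l+1), hcval j, hcval l] at hb
    have hent := ent2_rat j l
    have hcast : ((j+l+1 : ℕ):ℝ)+1 = (j:ℝ)+(l:ℝ)+2 := by push_cast; ring
    rw [hcast] at hb
    rw [hF]
    simp only
    have h1x : 1 - ((j:ℝ)+1)/((j:ℝ)+(l:ℝ)+2) = ((l:ℝ)+1)/((j:ℝ)+(l:ℝ)+2) := by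
      field_simp
      ring
    rw [← h1x] at hent
    linarith [hb, hent]
  -- density argument
  intro x hx
  set xk : ℕ → ℝ := fun k => ((Nat.floor (x * k) : ℝ) + 1)/((k:ℝ)+2) with hxk
  have hjk : ∀ k : ℕ, Nat.floor (x * k) ≤ k := by
    intro k
    have h1 : x * k ≤ (k:ℝ) := by nlinarith [hx.1, hx.2, (Nat.cast_nonneg k : (0:ℝ) ≤ (k:ℝ))]
    calc Nat.floor (x*k) ≤ Nat.floor ((k:ℝ)) := Nat.floor_le_floor h1
    _ = k := Nat.floor_natCast k
  have hxk0 : ∀ k : ℕ, F (xk k) = 0 := by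
    intro k
    have h := hFrat (Nat.floor (x*k)) (k - Nat.floor (x*k))
    have hc : ((Nat.floor (x*k)):ℝ) + ((k - Nat.floor (x*k) : ℕ):ℝ) + 2 = (k:ℝ)+2 := by
      push_cast [Nat.cast_sub (hjk k)]
      ring
    rw [hc] at h
    exact h
  have hmem : ∀ k : ℕ, xk k ∈ Set.Icc (0:ℝ) 1 := by
    intro k
    constructor
    · rw [hxk]
      simp only
      positivity
    · rw [hxk]
      simp only
      rw [div_le_one (by positivity)]
      have : ((Nat.floor (x*k)):ℝ) ≤ (k:ℝ) := by exact_mod_cast hjk k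
      linarith
  have htend : Filter.Tendsto xk Filter.atTop (nhds x) := by
    have hb : ∀ k : ℕ, ‖xk k - x‖ ≤ 2/((k:ℝ)+2) := by
      intro k
      have hk2 : (0:ℝ) < (k:ℝ)+2 := by positivity
      have h1 : ((Nat.floor (x*k)):ℝ) ≤ x*k := Nat.floor_le (mul_nonneg hx.1 (Nat.cast_nonneg k))
      have h2 : x*k < ((Nat.floor (x*k)):ℝ) + 1 := Nat.lt_floor_add_one _
      have e : xk k - x = (((Nat.floor (x*k)):ℝ) + 1 - x*((k:ℝ)+2))/((k:ℝ)+2) := by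
        rw [hxk]
        simp only
        field_simp
      rw [Real.norm_eq_abs, e, abs_div, abs_of_pos hk2]
      have hnum : |((Nat.floor (x*k)):ℝ) + 1 - x*((k:ℝ)+2)| ≤ 2 := by
        rw [abs_le]
        constructor <;> nlinarith [hx.1, hx.2, h1, h2]
      gcongr
    have h2k : Filter.Tendsto (fun k : ℕ => 2/((k:ℝ)+2)) Filter.atTop (nhds 0) := by
      have h1 : Filter.Tendsto (fun u : ℕ => ((u:ℝ)+2)) Filter.atTop Filter.atTop :=
        Filter.tendsto_atTop_add_const_right Filter.atTop (2:ℝ) tendsto_natCast_atTop_atTop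
      have := h1.inv_tendsto_atTop
      have h3 := this.const_mul (2:ℝ)
      rw [mul_zero] at h3
      simpa [div_eq_mul_inv] using h3
    have := squeeze_zero_norm hb h2k
    exact tendsto_sub_nhds_zero_iff.mp this
  have hcw := (hFcont x hx).tendsto
  have hcomp := hcw.comp
    (tendsto_nhdsWithin_iff.mpr ⟨htend, Filter.Eventually.of_forall hmem⟩)
  have hconst : (F ∘ xk) = fun _ => (0:ℝ) := funext hxk0
  rw [hconst] at hcomp
  exact tendsto_nhds_unique hcomp tendsto_const_nhds
lemma FIN (S : ∀ n : ℕ, (Fin n → ℝ) → ℝ)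
    (hcont : ContinuousOn (fun t : ℝ => S 2 ![t, 1 - t]) (Set.Icc 0 1))
    (hnorm : S 2 ![1/2, 1/2] = Real.log 2)
    (hsymm : ∀ (n : ℕ) (p : Fin n → ℝ), IsProbDist p → ∀ σ : Equiv.Perm (Fin n),
      S n (p ∘ σ) = S n p)
    (hrec : ∀ (n : ℕ) (p : Fin (n + 1) → ℝ), IsProbDist p → ∀ η : ℝ, 0 ≤ η → η ≤ 1 →
      S (n + 2) (Fin.snoc (Function.update p (Fin.last n) (η * p (Fin.last n)))
          ((1 - η) * p (Fin.last n)))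
        = S (n + 1) p + p (Fin.last n) * S 2 ![η, 1 - η]) :
    ∀ (n : ℕ) (p : Fin (n+1) → ℝ), IsProbDist p →
      S (n+1) p = ∑ i, Real.negMulLog (p i) := by
  intro n
  induction n with
  | zero =>
    intro p hp
    have hp0 : p 0 = 1 := by
      have := hp.2
      rwa [Fin.sum_univ_one] at this
    rw [S_one S hnorm hrec p hp, Fin.sum_univ_one, hp0]
    simp [Real.negMulLog, Real.log_one]
  | succ n ih =>
    intro p hp
    set a := p (Fin.castSucc (Fin.last n)) with haa
    set b := p (Fin.last (n+1)) with hbb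
    have ha0 : 0 ≤ a := hp.1 _
    have hb0 : 0 ≤ b := hp.1 _
    set s : ℝ := a + b with hs
    have hs0 : 0 ≤ s := by positivity
    set r : Fin (n+1) → ℝ := Function.update (Fin.init p) (Fin.last n) s with hr
    have hrl : r (Fin.last n) = s := by rw [hr, Function.update_self]
    set η : ℝ := if s = 0 then 1 else a / s with hη
    have hη0 : 0 ≤ η := by
      rw [hη]
      split
      · norm_num
      · positivity
    have hη1 : η ≤ 1 := by
      rw [hη]
      split
      · norm_num
      · rename_i hsne
        rw [div_le_one (lt_of_le_of_ne hs0 (Ne.symm hsne))]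
        linarith
    have hηs : η * s = a := by
      rw [hη]
      split
      · rename_i h0
        rw [h0, mul_zero]
        linarith [hs ▸ h0]
      · rename_i hsne
        field_simp
    have h1ηs : (1-η) * s = b := by
      have : η * s + (1-η) * s = s := by ring
      linarith [hηs]
    -- sums over p
    have hsump : ∑ j : Fin (n+1), p j.castSucc + b = 1 := by
      have := hp.2
      rwa [Fin.sum_univ_castSucc] at this
    -- r is a prob dist
    have hrinit : ∀ j : Fin (n+1), j ≠ Fin.last n → r j = p j.castSucc := by
      intro j hj
      rw [hr, Function.update_of_ne hj, Fin.init]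
    have hrp : IsProbDist r := by
      constructor
      · intro i
        by_cases hi : i = Fin.last n
        · rw [hi, hrl]; exact hs0
        · rw [hrinit i hi]; exact hp.1 _
      · rw [hr, Finset.sum_update_of_mem (Finset.mem_univ _)]
        rw [show (Finset.univ \ {Fin.last n}) = Finset.univ.erase (Fin.last n) by
          rw [Finset.sdiff_singleton_eq_erase]]
        rw [Finset.sum_erase_eq_sub (Finset.mem_univ _)]
        have e1 : ∑ j : Fin (n+1), Fin.init p j = ∑ j : Fin (n+1), p j.castSucc := by
          apply Finset.sum_congr rfl
          intro j _
          rw [Fin.init]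
        have e2 : Fin.init p (Fin.last n) = a := by rw [Fin.init, haa]
        rw [e1, e2]
        linarith [hsump]
    -- the snoc identity
    have hsnoc : Fin.snoc (Function.update r (Fin.last n) (η * r (Fin.last n)))
        ((1 - η) * r (Fin.last n)) = p := by
      rw [hrl]
      funext i
      refine Fin.lastCases ?_ ?_ i
      · rw [Fin.snoc_last, h1ηs, hbb]
      · intro j
        rw [Fin.snoc_castSucc]
        by_cases hj : j = Fin.last n
        · rw [hj, Function.update_self, hηs, haa]
        · rw [Function.update_of_ne hj, hrinit j hj]
    have hrec' := hrec n r hrp η hη0 hη1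
    rw [hsnoc] at hrec'
    -- binary entropy value
    have hbin : S 2 ![η, 1-η] = Real.negMulLog η + Real.negMulLog (1-η) :=
      F_zero S hcont hnorm hsymm hrec η ⟨hη0, hη1⟩
    -- sum computation
    have hsumr : ∑ j, Real.negMulLog (r j)
        = Real.negMulLog s + ∑ j : Fin (n+1), Real.negMulLog (p j.castSucc)
          - Real.negMulLog a := by
      have e : ∀ j : Fin (n+1), Real.negMulLog (r j)
          = Function.update (fun j : Fin (n+1) => Real.negMulLog (p j.castSucc))
              (Fin.last n) (Real.negMulLog s) j := by
        intro j
        by_cases hj : j = Fin.last n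
        · rw [hj, Function.update_self, hrl]
        · rw [Function.update_of_ne hj, hrinit j hj]
      rw [Finset.sum_congr rfl (fun j _ => e j)]
      rw [Finset.sum_update_of_mem (Finset.mem_univ _)]
      rw [show (Finset.univ \ {Fin.last n}) = Finset.univ.erase (Fin.last n) by
        rw [Finset.sdiff_singleton_eq_erase]]
      rw [Finset.sum_erase_eq_sub (Finset.mem_univ _)]
      rw [← haa]
      ring
    have hab : Real.negMulLog a + Real.negMulLog b
        = Real.negMulLog s + s * (Real.negMulLog η + Real.negMulLog (1-η)) := by
      rw [← hηs, ← h1ηs, Real.negMulLog_mul, Real.negMulLog_mul]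
      ring
    have hihr := ih r hrp
    rw [Fin.sum_univ_castSucc, hrec', hihr, hsumr, hbin, hrl, ← hbb]
    linarith [hab]

end KFAux

/-- Khinchin–Faddeev characterization of Shannon entropy. -/
theorem khinchin_faddeev (S : ∀ n : ℕ, (Fin n → ℝ) → ℝ)
    (hcont : ContinuousOn (fun t : ℝ => S 2 ![t, 1 - t]) (Set.Icc 0 1))
    (hnorm : S 2 ![1/2, 1/2] = Real.log 2)
    (hsymm : ∀ (n : ℕ) (p : Fin n → ℝ), IsProbDist p → ∀ σ : Equiv.Perm (Fin n),
      S n (p ∘ σ) = S n p)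
    (hrec : ∀ (n : ℕ) (p : Fin (n + 1) → ℝ), IsProbDist p → ∀ η : ℝ, 0 ≤ η → η ≤ 1 →
      S (n + 2) (Fin.snoc (Function.update p (Fin.last n) (η * p (Fin.last n)))
          ((1 - η) * p (Fin.last n)))
        = S (n + 1) p + p (Fin.last n) * S 2 ![η, 1 - η]) :
    ∀ (n : ℕ) (p : Fin n → ℝ), IsProbDist p →
      S n p = ∑ i, Real.negMulLog (p i) := by
  intro n p hp
  cases n with
  | zero => exact absurd hp.2 (by simp)
  | succ k => exact FIN S hcont hnorm hsymm hrec k p hp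

end
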